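/- Let n be a positive integer and j a real number with 2j an integer, j > 1, and n − 2j a positive even integer. Then the minimum of e_{j'}(j) over j' ∈ {j+1, j+2, …, n/2} equals 1/(2j+1), and it is attained at j' = j + 1. -/

import Mathlib

/-- The probability `e_{j'}(j)` that a random SWAP test on `2j'` qubits in the
angular-momentum-`j` sector detects a singlet. -/
noncomputable def eprob (j' j : ℝ) : ℝ :=
  (j' * (j' + 1) - j * (j + 1)) / (2 * j' * (2 * j' - 1))

lemma eprob_base (j : ℝ) (hj : 1 < j) : eprob (j + 1) j = 1 / (2 * j + 1) := by
  have h1 : (2 * (j + 1) * (2 * (j + 1) - 1)) ≠ 0 := by nlinarith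
  have h2 : (2 * j + 1) ≠ 0 := by nlinarith
  rw [eprob]
  rw [div_eq_div_iff h1 h2]
  ring

/-- **Minimum singlet-detection probability, case `j > 1`.** If `n` is a positive integer
and `j` a real number with `2j` an integer, `j > 1`, and `n - 2j = 2k` a positive even
integer, then the minimum of `e_{j'}(j)` over `j' ∈ {j+1, j+2, …, n/2}` equals
`1/(2j+1)`, attained at `j' = j + 1`. -/
theorem min_eprob_j_gt_one
    (n : ℕ) (hn : 0 < n) (j : ℝ) (h2j : ∃ m : ℕ, (m : ℝ) = 2 * j) (hj : 1 < j)
    (k : ℕ) (hk : 0 < k) (hkj : (n : ℝ) - 2 * j = 2 * k) :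
    IsLeast (Set.range fun r : Fin k => eprob (j + ((r : ℝ) + 1)) j) (1 / (2 * j + 1))
      ∧ eprob (j + 1) j = 1 / (2 * j + 1) := by
  obtain ⟨m, hm⟩ := h2j
  have hm3 : (3 : ℝ) ≤ m := by
    have : (2 : ℝ) < m := by rw [hm]; linarith
    exact_mod_cast (by exact_mod_cast this : 2 < m)
  have ha : (3 : ℝ) ≤ 2 * j := hm ▸ hm3
  refine ⟨⟨⟨⟨0, hk⟩, ?_⟩, ?_⟩, eprob_base j hj⟩
  · simp [eprob_base j hj]
  · rintro x ⟨r, rfl⟩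
    simp only [eprob]
    set t : ℝ := (r : ℝ) + 1 with ht
    have ht1 : 1 ≤ t := by
      have : (0 : ℝ) ≤ (r : ℝ) := Nat.cast_nonneg _
      linarith
    rw [div_le_div_iff₀ (by linarith) (by nlinarith)]
    nlinarith [mul_nonneg (sub_nonneg.2 ht1) (by nlinarith : (0:ℝ) ≤ 2*j*(2*j-1) + t*(2*j-3))]
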